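/- Let W ⊆ ℝⁿ be semi-open, w ∈ W, and let v₁,…,v_m : W → ℝ be finitely many continuous functions. Then there exists a function h : ℝ → ℝⁿ with h(0) = 0, continuous at 0, such that W continues into direction h at w and each vⱼ is either decreasing, constant, or increasing into direction h at w. -/

import Mathlib

def SemiOpen {n : ℕ} (X : Set (Fin n → ℝ)) : Prop :=
  X ⊆ closure (interior X)

/-- `W` continues into direction `h` at `w`. -/
def ContinuesInto {n : ℕ} (W : Set (Fin n → ℝ)) (h : ℝ → (Fin n → ℝ))
    (w : Fin n → ℝ) : Prop :=
  ∃ δ > (0:ℝ), ∀ a : ℝ, 0 < a → a < δ → ∃ U ∈ nhds (w + h a), U ⊆ W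

/-- `sgn (f - f w)` is constantly `k` on a neighborhood of `w + h a` for all small `a > 0`. -/
def SignIntoDirection {n : ℕ} (k : ℝ) (f : (Fin n → ℝ) → ℝ)
    (h : ℝ → (Fin n → ℝ)) (w : Fin n → ℝ) : Prop :=
  ∃ δ > (0:ℝ), ∀ a : ℝ, 0 < a → a < δ →
    ∃ U ∈ nhds (w + h a), ∀ y ∈ U, Real.sign (f y - f w) = k


open Metric

/-- Refinement lemma: inside a ball contained in `interior W`, we can find a smaller
ball on which each `v j - v j w` (for `j` in a finite set) has constant sign. -/
lemma sign_refine {n m : ℕ} (W : Set (Fin n → ℝ)) (w : Fin n → ℝ)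
    (v : Fin m → (Fin n → ℝ) → ℝ)
    (hc : ∀ j, ∀ x ∈ interior W, ContinuousAt (v j) x)
    (T : Finset (Fin m)) :
    ∀ (x : Fin n → ℝ) (r : ℝ), 0 < r → ball x r ⊆ interior W →
      ∃ x' r', 0 < r' ∧ ball x' r' ⊆ ball x r ∧
        ∀ j ∈ T, ∃ k : ℝ, ∀ y ∈ ball x' r', Real.sign (v j y - v j w) = k := by
  induction T using Finset.induction with
  | empty => exact fun x r hr _ => ⟨x, r, hr, subset_rfl, by simp⟩
  | @insert a T ha ih =>
    intro x r hr hsub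
    obtain ⟨x', r', hr', hsub', hsign⟩ := ih x r hr hsub
    by_cases hz : ∀ y ∈ ball x' r', v a y = v a w
    · refine ⟨x', r', hr', hsub', fun j hj => ?_⟩
      rcases Finset.mem_insert.mp hj with rfl | hj
      · exact ⟨0, fun y hy => by simp [hz y hy]⟩
      · exact hsign j hj
    · push_neg at hz
      obtain ⟨y₀, hy₀, hne⟩ := hz
      have hy₀W : y₀ ∈ interior W := hsub (hsub' hy₀)
      have hcont : ContinuousAt (fun y => v a y - v a w) y₀ :=
        (hc a y₀ hy₀W).sub continuousAt_const
      have hne' : v a y₀ - v a w ≠ 0 := sub_ne_zero_of_ne hne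
      rcases hne'.lt_or_gt with hneg | hpos
      · have hev : ∀ᶠ z in nhds y₀, (fun y => v a y - v a w) z < 0 :=
          hcont.eventually_lt continuousAt_const hneg
        have hmem : {z | v a z - v a w < 0} ∩ ball x' r' ∈ nhds y₀ :=
          Filter.inter_mem hev (isOpen_ball.mem_nhds hy₀)
        obtain ⟨ε, hε, hball⟩ := Metric.mem_nhds_iff.mp hmem
        refine ⟨y₀, ε, hε, fun z hz => hsub' (hball hz).2, fun j hj => ?_⟩
        rcases Finset.mem_insert.mp hj with rfl | hj
        · exact ⟨-1, fun y hy => Real.sign_of_neg (hball hy).1⟩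
        · obtain ⟨k, hk⟩ := hsign j hj
          exact ⟨k, fun y hy => hk y (hball hy).2⟩
      · have hev : ∀ᶠ z in nhds y₀, 0 < (fun y => v a y - v a w) z :=
          continuousAt_const.eventually_lt hcont hpos
        have hmem : {z | 0 < v a z - v a w} ∩ ball x' r' ∈ nhds y₀ :=
          Filter.inter_mem hev (isOpen_ball.mem_nhds hy₀)
        obtain ⟨ε, hε, hball⟩ := Metric.mem_nhds_iff.mp hmem
        refine ⟨y₀, ε, hε, fun z hz => hsub' (hball hz).2, fun j hj => ?_⟩
        rcases Finset.mem_insert.mp hj with rfl | hj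
        · exact ⟨1, fun y hy => Real.sign_of_pos (hball hy).1⟩
        · obtain ⟨k, hk⟩ := hsign j hj
          exact ⟨k, fun y hy => hk y (hball hy).2⟩

/-- ε-lemma: for every ε>0 there is a ball inside `W`, ε-close to `w`, on which each
`v j - v j w` has constant sign, encoded by a `SignType` vector. -/
lemma sign_ball {n m : ℕ} (W : Set (Fin n → ℝ)) (hW : SemiOpen W)
    (w : Fin n → ℝ) (hw : w ∈ W)
    (v : Fin m → (Fin n → ℝ) → ℝ) (hv : ∀ j, ContinuousOn (v j) W)
    (ε : ℝ) (hε : 0 < ε) :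
    ∃ (t : Fin m → SignType) (x : Fin n → ℝ) (r : ℝ), 0 < r ∧ dist x w < ε ∧
      ball x r ⊆ W ∧ ∀ j, ∀ y ∈ ball x r, Real.sign (v j y - v j w) = ((t j : ℤ) : ℝ) := by
  have hc : ∀ j, ∀ x ∈ interior W, ContinuousAt (v j) x := by
    intro j x hx
    exact (hv j x (interior_subset hx)).continuousAt (mem_nhds_iff.mpr ⟨interior W, interior_subset, isOpen_interior, hx⟩)
  -- find an interior point close to w
  have hwc : w ∈ closure (interior W) := hW hw
  have hne : (interior W ∩ ball w ε).Nonempty := by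
    rcases mem_closure_iff.mp hwc (ball w ε) isOpen_ball (mem_ball_self hε) with ⟨z, hz1, hz2⟩
    exact ⟨z, hz2, hz1⟩
  obtain ⟨z, hzW, hzb⟩ := hne
  obtain ⟨r0, hr0, hball0⟩ := Metric.mem_nhds_iff.mp
    ((isOpen_interior.inter isOpen_ball).mem_nhds ⟨hzW, hzb⟩)
  obtain ⟨x', r', hr', hsub', hsign⟩ := sign_refine W w v hc Finset.univ z r0 hr0
    (fun y hy => (hball0 hy).1)
  have hx'z : x' ∈ ball z r0 := hsub' (mem_ball_self hr')
  have hx'w : dist x' w < ε := (hball0 hx'z).2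
  -- convert each sign to a SignType
  have hsign' : ∀ j : Fin m, ∃ t : SignType, ∀ y ∈ ball x' r',
      Real.sign (v j y - v j w) = ((t : ℤ) : ℝ) := by
    intro j
    obtain ⟨k, hk⟩ := hsign j (Finset.mem_univ j)
    have hx'mem := hk x' (mem_ball_self hr')
    rcases lt_trichotomy (v j x' - v j w) 0 with h | h | h
    · exact ⟨SignType.neg, fun y hy => by
        rw [hk y hy, ← hx'mem, Real.sign_of_neg h]; norm_num⟩
    · exact ⟨SignType.zero, fun y hy => by
        rw [hk y hy, ← hx'mem, h, Real.sign_zero]; norm_num⟩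
    · exact ⟨SignType.pos, fun y hy => by
        rw [hk y hy, ← hx'mem, Real.sign_of_pos h]; norm_num⟩
  choose t ht using hsign'
  exact ⟨t, x', r', hr', hx'w,
    fun y hy => interior_subset ((hball0 (hsub' hy)).1), fun j y hy => ht j y hy⟩

theorem stmt_16 {n m : ℕ} (W : Set (Fin n → ℝ)) (hW : SemiOpen W)
    (w : Fin n → ℝ) (hw : w ∈ W)
    (v : Fin m → (Fin n → ℝ) → ℝ) (hv : ∀ j, ContinuousOn (v j) W) :
    ∃ h : ℝ → (Fin n → ℝ), h 0 = 0 ∧ ContinuousAt h 0 ∧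
      ContinuesInto W h w ∧
      ∀ j, SignIntoDirection (-1) (v j) h w ∨ SignIntoDirection 0 (v j) h w ∨
        SignIntoDirection 1 (v j) h w := by
  -- pigeonhole: some sign vector works for all ε
  set P : (Fin m → SignType) → ℝ → Prop := fun t ε =>
    ∃ (x : Fin n → ℝ) (r : ℝ), 0 < r ∧ dist x w < ε ∧ ball x r ⊆ W ∧
      ∀ j, ∀ y ∈ ball x r, Real.sign (v j y - v j w) = ((t j : ℤ) : ℝ) with hP
  have hmono : ∀ t ε ε', ε ≤ ε' → P t ε → P t ε' := by
    rintro t ε ε' hle ⟨x, r, h1, h2, h3, h4⟩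
    exact ⟨x, r, h1, lt_of_lt_of_le h2 hle, h3, h4⟩
  have hgood : ∃ t : Fin m → SignType, ∀ ε > (0:ℝ), P t ε := by
    by_contra hcon
    push_neg at hcon
    choose ε hε hnP using hcon
    obtain ⟨ε₀, hε₀pos, hε₀le⟩ : ∃ ε₀ > (0:ℝ), ∀ t, ε₀ ≤ ε t := by
      refine ⟨Finset.univ.inf' ⟨default, Finset.mem_univ _⟩ ε, ?_, ?_⟩
      · exact (Finset.lt_inf'_iff _).mpr fun t _ => hε t
      · exact fun t => Finset.inf'_le _ (Finset.mem_univ t)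
    obtain ⟨t, x, r, h1, h2, h3, h4⟩ := sign_ball W hW w hw v hv ε₀ hε₀pos
    exact hnP t (hmono t ε₀ (ε t) (hε₀le t) ⟨x, r, h1, h2, h3, h4⟩)
  obtain ⟨t, hPt⟩ := hgood
  choose! x r hr hd hsub hsign using hPt
  -- define h
  refine ⟨fun a => if h : 0 < a then x a - w else 0, by norm_num, ?_, ?_, ?_⟩
  · -- continuity at 0
    rw [Metric.continuousAt_iff]
    intro ε hε
    refine ⟨ε, hε, fun a ha => ?_⟩
    simp only [dist_zero_right] at ha ⊢
    by_cases h : 0 < a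
    · simp only [dif_pos h, dif_neg (lt_irrefl (0:ℝ))]
      have : dist (x a) w < a := hd a h
      calc ‖x a - w - 0‖ = dist (x a) w := by simp [dist_eq_norm]
        _ < a := this
        _ ≤ |a| := le_abs_self a
        _ < ε := by simpa [Real.norm_eq_abs] using ha
    · simp only [dif_neg h, dif_neg (lt_irrefl (0:ℝ))]
      simpa using hε
  · -- ContinuesInto
    refine ⟨1, one_pos, fun a ha _ => ?_⟩
    have hx : w + (if h : 0 < a then x a - w else 0) = x a := by
      rw [dif_pos ha]; ring
    rw [hx]
    exact ⟨ball (x a) (r a), ball_mem_nhds _ (hr a ha), hsub a ha⟩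
  · -- signs
    intro j
    have key : SignIntoDirection (((t j : ℤ) : ℝ)) (v j) (fun a => if h : 0 < a then x a - w else 0) w := by
      refine ⟨1, one_pos, fun a ha _ => ?_⟩
      have hx : w + (if h : 0 < a then x a - w else 0) = x a := by
        rw [dif_pos ha]; ring
      rw [hx]
      exact ⟨ball (x a) (r a), ball_mem_nhds _ (hr a ha), fun y hy => hsign a ha j y hy⟩
    cases htj : t j with
    | neg => rw [htj] at key; left; simpa using key
    | zero => rw [htj] at key; right; left; simpa using key
    | pos => rw [htj] at key; right; right; simpa using key
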